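/- Let K be a complex constant with Re K ≥ 0 and let P₀ ∈ ℂ. Then the initial value problem P'(τ) = -(K/2)|P(τ)|²P(τ), P(0)=P₀, has the explicit solution P(τ) = P₀ · exp(-iΘ(τ)) / sqrt(1 + (Re K)|P₀|²τ), where Θ(τ) = (1/2)(Im K) ∫₀^τ |P₀|²/(1 + (Re K)|P₀|²τ') dτ'. -/

import Mathlib

open MeasureTheory

lemma final_alg (K P₀ E : ℂ) (c f s : ℝ) (hf : f ≠ 0) (hs : s ≠ 0)
    (hs2 : s ^ 2 = f) :
    (P₀ * (E * (-Complex.I * (((1/2) * K.im * (c / f) : ℝ) : ℂ))) * (s:ℂ)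
        - P₀ * E * ((K.re * c / (2 * s) : ℝ) : ℂ)) / (s:ℂ) ^ 2
      = -(K / 2) * ((c / f : ℝ) : ℂ) * (P₀ * E / (s:ℂ)) := by
  have hsC : (s:ℂ) ≠ 0 := Complex.ofReal_ne_zero.mpr hs
  have hfC : (f:ℂ) ≠ 0 := Complex.ofReal_ne_zero.mpr hf
  have hs2C : ((s:ℂ)) ^ 2 = (f:ℂ) := by exact_mod_cast congrArg Complex.ofReal hs2
  have hK : (K.re : ℂ) + (K.im : ℂ) * Complex.I = K := Complex.re_add_im K
  push_cast
  rw [← hK, ← hs2C]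
  field_simp
  ring_nf
  simp only [Complex.add_re, Complex.add_im, Complex.mul_re, Complex.mul_im, Complex.I_re, Complex.I_im, Complex.ofReal_re, Complex.ofReal_im]
  have h1 : (s:ℂ)^5 * ((s:ℂ)⁻¹)^5 = 1 := by
    rw [← mul_pow, mul_inv_cancel₀ hsC, one_pow]
  push_cast
  ring


/-- explicit solution of the cubic ODE P' = -(K/2)|P|²P. -/
theorem explicit_solution_cubic_ode
    (K P₀ : ℂ) (hK : 0 ≤ K.re)
    (Θ : ℝ → ℝ) (P : ℝ → ℂ)
    (hΘ : ∀ τ : ℝ, Θ τ =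
      (1/2) * K.im * ∫ τ' in (0:ℝ)..τ, ‖P₀‖^2 / (1 + K.re * ‖P₀‖^2 * τ'))
    (hP : ∀ τ : ℝ, P τ =
      P₀ * Complex.exp (-(Complex.I) * (Θ τ : ℂ)) /
        (Real.sqrt (1 + K.re * ‖P₀‖^2 * τ) : ℂ)) :
    P 0 = P₀ ∧
    ∀ τ : ℝ, 0 ≤ τ →
      HasDerivAt P (-(K/2) * (‖P τ‖^2 : ℝ) * P τ) τ := by
  set c : ℝ := ‖P₀‖^2 with hc
  set a : ℝ := K.re * c with ha
  have ha0 : 0 ≤ a := mul_nonneg hK (by positivity)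
  constructor
  · have h0 : Θ 0 = 0 := by simp [hΘ 0]
    rw [hP 0, h0]
    simp
  · intro τ hτ
    have hfpos : (0:ℝ) < 1 + a * τ := by nlinarith
    have hfne : (1 + a * τ) ≠ 0 := ne_of_gt hfpos
    set s : ℝ := Real.sqrt (1 + a * τ) with hs
    have hspos : 0 < s := Real.sqrt_pos.mpr hfpos
    have hsne : (s:ℂ) ≠ 0 := by exact_mod_cast ne_of_gt hspos
    have hs2 : s ^ 2 = 1 + a * τ := Real.sq_sqrt hfpos.le
    have hmeas : Measurable fun x : ℝ => c / (1 + a * x) :=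
      measurable_const.div (measurable_const.add (measurable_const.mul measurable_id))
    have hint : IntervalIntegrable (fun x : ℝ => c / (1 + a * x)) volume 0 τ := by
      apply ContinuousOn.intervalIntegrable
      apply ContinuousOn.div continuousOn_const
      · exact (continuous_const.add (continuous_const.mul continuous_id)).continuousOn
      · intro x hx
        rw [Set.uIcc_of_le hτ] at hx
        have := hx.1
        nlinarith
    have hF : HasDerivAt (fun t : ℝ => ∫ x in (0:ℝ)..t, c / (1 + a * x))
        (c / (1 + a * τ)) τ := by
      apply intervalIntegral.integral_hasDerivAt_right hint
      · exact ⟨Set.univ, Filter.univ_mem, hmeas.aestronglyMeasurable.restrict⟩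
      · exact continuousAt_const.div (by fun_prop) hfne
    have hΘ' : HasDerivAt Θ ((1/2) * K.im * (c / (1 + a * τ))) τ :=
      (hF.const_mul ((1/2) * K.im)).congr_of_eventuallyEq
        (Filter.Eventually.of_forall fun t => hΘ t)
    have hE : HasDerivAt (fun t : ℝ => Complex.exp (-(Complex.I) * (Θ t : ℂ)))
        (Complex.exp (-(Complex.I) * (Θ τ : ℂ)) *
          (-(Complex.I) * (((1/2) * K.im * (c / (1 + a * τ)) : ℝ) : ℂ))) τ := by
      have h1 : HasDerivAt (fun t : ℝ => -(Complex.I) * ((Θ t : ℝ) : ℂ))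
          (-(Complex.I) * (((1/2) * K.im * (c / (1 + a * τ)) : ℝ) : ℂ)) τ :=
        hΘ'.ofReal_comp.const_mul (-(Complex.I))
      exact h1.cexp
    have hlin : HasDerivAt (fun t : ℝ => 1 + a * t) a τ := by
      simpa using ((hasDerivAt_id τ).const_mul a).const_add 1
    have hsq : HasDerivAt (fun t : ℝ => Real.sqrt (1 + a * t)) (a / (2 * s)) τ := by
      have h2 := (Real.hasDerivAt_sqrt hfne).comp τ hlin
      convert h2 using 1
      · rfl
      · rfl
      · rfl
      rw [hs]
      ring
    have hsqC : HasDerivAt (fun t : ℝ => ((Real.sqrt (1 + a * t) : ℝ) : ℂ))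
        (((a / (2 * s) : ℝ)) : ℂ) τ := hsq.ofReal_comp
    have hnum : HasDerivAt (fun t : ℝ => P₀ * Complex.exp (-(Complex.I) * (Θ t : ℂ)))
        (P₀ * (Complex.exp (-(Complex.I) * (Θ τ : ℂ)) *
          (-(Complex.I) * (((1/2) * K.im * (c / (1 + a * τ)) : ℝ) : ℂ)))) τ :=
      hE.const_mul P₀
    have hdiv := hnum.div hsqC hsne
    have hPeq : P = fun t : ℝ =>
        P₀ * Complex.exp (-(Complex.I) * (Θ t : ℂ)) /
          ((Real.sqrt (1 + a * t) : ℝ) : ℂ) := funext hP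
    rw [hPeq]
    convert hdiv using 1
    · rfl
    · rfl
    have hnormP : ‖P τ‖^2 = c / (1 + a * τ) := by
      rw [hP τ]
      rw [norm_div, norm_mul, Complex.norm_exp]
      have hre : (-(Complex.I) * ((Θ τ : ℝ) : ℂ)).re = 0 := by simp
      rw [hre, Real.exp_zero, mul_one]
      simp only [Complex.norm_real, Real.norm_eq_abs, abs_of_pos hspos]
      rw [div_pow, sq_abs, Real.sq_sqrt hfpos.le, hc]
    beta_reduce
    rw [← hP τ, hnormP, hP τ]
    set E : ℂ := Complex.exp (-(Complex.I) * (Θ τ : ℂ)) with hE2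
    exact (final_alg K P₀ E c (1 + a * τ) s hfne (ne_of_gt hspos) hs2).symm
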